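/- Every finite digital image (T,κ) whose adjacency graph is a tree (i.e., connected and acyclic) has the approximate fixed point property. -/

import Mathlib

/-- A function `f : X → Y` is `(κ,λ)`-continuous between digital images. -/
def DigContinuous {X Y : Type*} (kappa : X → X → Prop) (lam : Y → Y → Prop)
    (f : X → Y) : Prop :=
  ∀ x x', kappa x x' → f x = f x' ∨ lam (f x) (f x')

/-- `(X,κ)` has the approximate fixed point property. -/
def HasAFPP {X : Type*} (kappa : X → X → Prop) : Prop :=
  ∀ f : X → X, DigContinuous kappa kappa f → ∃ x, f x = x ∨ kappa (f x) x

/-- The normal product adjacency `NP(κ,λ)` on `X × Y`. -/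
def NP {X Y : Type*} (kappa : X → X → Prop) (lam : Y → Y → Prop)
    (p q : X × Y) : Prop :=
  p ≠ q ∧ (kappa p.1 q.1 ∨ p.1 = q.1) ∧ (lam p.2 q.2 ∨ p.2 = q.2)

/-- The `c_u`-adjacency on `ℤ^n`. -/
def cAdj (u : ℕ) {n : ℕ} (x y : Fin n → ℤ) : Prop :=
  x ≠ y ∧ (∀ i, |x i - y i| ≤ 1) ∧
    (Finset.univ.filter (fun i => x i ≠ y i)).card ≤ u


open SimpleGraph

/-- A leaf (vertex with unique neighbor `u`) cannot lie on a path between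
two vertices different from it. -/
lemma leaf_not_mem_path_support {V : Type*} {G : SimpleGraph V} {v u a b : V}
    (hleaf : ∀ w, G.Adj v w → w = u) {p : G.Walk a b} (hp : p.IsPath)
    (ha : a ≠ v) (hb : b ≠ v) : v ∉ p.support := by
  classical
  intro h
  have hp' : ((p.takeUntil v h).append (p.dropUntil v h)).IsPath := by
    rw [p.take_spec h]; exact hp
  have hnd := hp'.support_nodup
  rw [SimpleGraph.Walk.support_append] at hnd
  have hdisj := (List.nodup_append.mp hnd).2.2
  -- u in tail support of dropUntil
  have h2 : u ∈ (p.dropUntil v h).support.tail := by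
    generalize hq : p.dropUntil v h = p2 at *
    cases p2 with
    | nil => exact (hb rfl).elim
    | cons hvx q =>
      have := hleaf _ hvx
      subst this
      simp
  -- u in support of takeUntil
  have h1 : u ∈ (p.takeUntil v h).support := by
    have hrev : u ∈ (p.takeUntil v h).reverse.support := by
      generalize hq : (p.takeUntil v h).reverse = p1 at *
      cases p1 with
      | nil => exact (ha rfl).elim
      | cons hvy q =>
        have := hleaf _ hvy
        subst this
        simp
    rw [SimpleGraph.Walk.support_reverse, List.mem_reverse] at hrev
    exact hrev
  exact hdisj u h1 u h2 rfl

/-- Transfer a walk avoiding `v` to the comap graph on `{x // x ≠ v}`. -/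
lemma reachable_comap_of_walk {V : Type*} {G : SimpleGraph V} {v : V} :
    ∀ {a b : V} (p : G.Walk a b), (∀ x ∈ p.support, x ≠ v) →
      ∀ (ha : a ≠ v) (hb : b ≠ v),
      (G.comap (Subtype.val : {x // x ≠ v} → V)).Reachable ⟨a, ha⟩ ⟨b, hb⟩ := by
  intro a b p
  induction p with
  | nil => intro _ ha hb; rfl
  | cons h q ih =>
    intro hsupp ha hb
    have hq : ∀ x ∈ q.support, x ≠ v := fun x hx => hsupp x (by simp [hx])
    have hmid : _ ≠ v := hq _ q.start_mem_support
    exact (SimpleGraph.Adj.reachable (by exact h)).trans (ih hq hmid hb)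

private lemma afpp_aux : ∀ (n : ℕ) {T : Type*} [Fintype T] (kappa : T → T → Prop)
    (hsym : Symmetric kappa) (hirr : Irreflexive kappa),
    (SimpleGraph.mk kappa ⟨fun _ _ h => hsym h⟩ ⟨hirr⟩).IsTree → Fintype.card T = n → HasAFPP kappa := by
  intro n
  induction n using Nat.strong_induction_on with
  | _ n ih =>
    intro T _ kappa hsym hirr htree hcard f hf
    classical
    set G : SimpleGraph T := SimpleGraph.mk kappa ⟨fun _ _ h => hsym h⟩ ⟨hirr⟩ with hG
    have hne : Nonempty T := htree.isConnected.nonempty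
    rcases Nat.lt_or_ge n 2 with hn | hn
    · -- at most one vertex
      obtain ⟨x⟩ := hne
      refine ⟨x, Or.inl ?_⟩
      have : Fintype.card T ≤ 1 := by omega
      exact Subsingleton.elim (α := T) (h := Fintype.card_le_one_iff_subsingleton.mp this) _ _
    · -- find a leaf
      have hdegsum : ∑ w, G.degree w = 2 * G.edgeFinset.card :=
        G.sum_degrees_eq_twice_card_edges
      have hedges : G.edgeFinset.card + 1 = Fintype.card T := htree.card_edgeFinset
      have hdegpos : ∀ w : T, 0 < G.degree w := by
        intro w
        rw [SimpleGraph.degree_pos_iff_exists_adj]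
        obtain ⟨w', hww'⟩ := Fintype.exists_ne_of_one_lt_card (by omega) w
        have hreach : G.Reachable w w' := htree.isConnected w w'
        obtain ⟨p⟩ := hreach
        cases p with
        | nil => exact (hww' rfl).elim
        | cons h q => exact ⟨_, h⟩
      -- some vertex has degree exactly 1
      have hleafex : ∃ v : T, G.degree v = 1 := by
        by_contra hno
        push_neg at hno
        have h2 : ∀ w : T, 2 ≤ G.degree w := by
          intro w
          have := hdegpos w
          have := hno w
          omega
        have : 2 * Fintype.card T ≤ ∑ w, G.degree w := by
          calc 2 * Fintype.card T = ∑ _w : T, 2 := by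
                simp [Finset.sum_const, Finset.card_univ, mul_comm]
            _ ≤ ∑ w, G.degree w := Finset.sum_le_sum (fun w _ => h2 w)
        omega
      obtain ⟨v, hdeg⟩ := hleafex
      obtain ⟨u, hu⟩ := Finset.card_eq_one.mp hdeg
      have hadj : G.Adj v u := by
        rw [← SimpleGraph.mem_neighborFinset, hu]; simp
      have hleaf : ∀ w, G.Adj v w → w = u := by
        intro w hw
        have : w ∈ G.neighborFinset v := by rwa [SimpleGraph.mem_neighborFinset]
        rw [hu] at this; simpa using this
      have huv : u ≠ v := fun h => hirr v (h ▸ hadj)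
      -- the subtree on the complement of the leaf
      set S := {x : T // x ≠ v} with hS
      set kappa' : S → S → Prop := fun a b => kappa a.1 b.1 with hk'
      have hsym' : Symmetric kappa' := fun a b h => hsym h
      have hirr' : Irreflexive kappa' := fun a h => hirr a.1 h
      set G' : SimpleGraph S := SimpleGraph.mk kappa' ⟨fun _ _ h => hsym' h⟩ ⟨hirr'⟩ with hG'
      have hcardS : Fintype.card S = Fintype.card T - 1 := by
        have h0 := Fintype.card_subtype_compl (fun x : T => x = v)
        rw [Fintype.card_subtype_eq] at h0
        exact h0
      have htree' : G'.IsTree := by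
        constructor
        · rw [SimpleGraph.connected_iff]
          refine ⟨?_, ⟨⟨u, huv⟩⟩⟩
          intro a b
          have hreach : G.Reachable a.1 b.1 := htree.isConnected a.1 b.1
          obtain ⟨p⟩ := hreach
          have hvnot : v ∉ (p.toPath : G.Walk a.1 b.1).support :=
            leaf_not_mem_path_support hleaf (p.toPath.2) a.2 b.2
          have hre := reachable_comap_of_walk (v := v) (p.toPath : G.Walk a.1 b.1)
            (fun x hx hxv => hvnot (hxv ▸ hx)) a.2 b.2
          obtain ⟨q⟩ := hre
          refine ⟨q.mapLe ?_⟩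
          intro x y hxy
          exact hxy
        · intro a c hc
          have hinj : Function.Injective (Subtype.val : S → T) := Subtype.val_injective
          have hcyc : ((c.map (⟨Subtype.val, fun {x y} h => h⟩ : G' →g G)).IsCycle) :=
            hc.map hinj
          exact htree.IsAcyclic _ hcyc
      -- retraction and induced map
      have hrne : ∀ x : T, (if x = v then u else x) ≠ v := by
        intro x
        by_cases hx : x = v <;> simp [hx, huv]
      set g : S → S := fun a => ⟨if f a.1 = v then u else f a.1, hrne _⟩ with hg
      have hgc : DigContinuous kappa' kappa' g := by
        intro a b hab
        rcases hf a.1 b.1 hab with heq | hadj2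
        · left; exact Subtype.ext (by simp [hg, heq])
        · by_cases hfa : f a.1 = v
          · have hfb : f b.1 = u := by
              have hadj2' := hadj2
              rw [hfa] at hadj2'
              exact hleaf _ hadj2'
            left
            exact Subtype.ext (by simp [hg, hfa, hfb, huv])
          · by_cases hfb : f b.1 = v
            · have hfa2 : f a.1 = u := by
                have hadj2' := hadj2
                rw [hfb] at hadj2'
                exact hleaf _ (hsym hadj2')
              left
              exact Subtype.ext (by simp [hg, hfa2, hfb, huv])
            · right
              show kappa _ _
              simpa [hg, hfa, hfb] using hadj2
      obtain ⟨a, hafix⟩ := ih (Fintype.card S) (by omega) kappa' hsym' hirr' htree' rfl g hgc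
      by_cases hfx : f a.1 = v
      · -- the image of a is the leaf v
        rcases hafix with h1 | h1
        · -- g a = a, hence u = a
          have h2 : (if f a.1 = v then u else f a.1) = a.1 := congrArg Subtype.val h1
          rw [if_pos hfx] at h2
          refine ⟨a.1, Or.inr ?_⟩
          rw [hfx, ← h2]
          exact hadj
        · -- kappa u a
          have hua : kappa (if f a.1 = v then u else f a.1) a.1 := h1
          rw [if_pos hfx] at hua
          rcases hf a.1 u (hsym hua) with heq | hadj3
          · exact ⟨u, Or.inr (by rw [← heq, hfx]; exact hadj)⟩
          · rw [hfx] at hadj3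
            exact ⟨u, Or.inl (hleaf _ hadj3)⟩
      · refine ⟨a.1, ?_⟩
        rcases hafix with h1 | h1
        · left
          have h2 : (if f a.1 = v then u else f a.1) = a.1 := congrArg Subtype.val h1
          rwa [if_neg hfx] at h2
        · right
          have h2 : kappa (if f a.1 = v then u else f a.1) a.1 := h1
          rwa [if_neg hfx] at h2

/-- A finite digital image whose adjacency graph is a tree has the AFPP. -/
theorem afpp_of_tree {T : Type*} [Fintype T] (kappa : T → T → Prop)
    (hsym : Symmetric kappa) (hirr : Irreflexive kappa)
    (htree : (SimpleGraph.mk kappa ⟨fun _ _ h => hsym h⟩ ⟨hirr⟩).IsTree) :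
    HasAFPP kappa := by
  exact afpp_aux (Fintype.card T) kappa hsym hirr htree rfl
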